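/- Let w : Fin n → ℕ and let B : Fin m → Finset (Fin n) be pairwise disjoint blocks whose union is all of Fin n. For each k let A k ⊆ B k be a Finset, D k := (∑ i in A k, (w i : ℤ)) − (∑ i in (B k \ A k), (w i : ℤ)), and E k := |D k| ∈ ℕ the sub-error. Then the minimum of E(w, Â) over all merged solutions Â (i.e., over all sign choices s : Fin m → {−1,1}, with Â := (⋃ over k with s k = 1 of A k) ∪ (⋃ over k with s k = −1 of B k \ A k)) equals the optimal value of the auxiliary NPP on the sub-errors: min over Finsets A' ⊆ Fin m of |(∑ k in A', (E k : ℤ)) − (∑ k in A'ᶜ, (E k : ℤ))|. -/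

import Mathlib

/-- The minimal NPP error over all merged solutions (over all sign choices)
equals the optimal value of the auxiliary NPP whose weights are the sub-errors
`E k = |D k|`. -/
theorem npp_merge_min_eq_aux_npp_min (n m : ℕ) (w : Fin n → ℕ)
    (B : Fin m → Finset (Fin n))
    (hdisj : ∀ k l, k ≠ l → Disjoint (B k) (B l))
    (hcover : Finset.univ.biUnion B = Finset.univ)
    (A : Fin m → Finset (Fin n)) (hA : ∀ k, A k ⊆ B k)
    (D : Fin m → ℤ)
    (hD : ∀ k, D k = (∑ i ∈ A k, (w i : ℤ)) - ∑ i ∈ B k \ A k, (w i : ℤ))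
    (E : Fin m → ℕ) (hE : ∀ k, (E k : ℤ) = |D k|) :
    sInf {e : ℤ | ∃ s : Fin m → ℤ, (∀ k, s k = -1 ∨ s k = 1) ∧
        e = |(∑ i ∈ (Finset.univ.filter (fun k => s k = 1)).biUnion A ∪
                (Finset.univ.filter (fun k => s k = -1)).biUnion
                  (fun k => B k \ A k), (w i : ℤ)) -
              ∑ i ∈ ((Finset.univ.filter (fun k => s k = 1)).biUnion A ∪
                (Finset.univ.filter (fun k => s k = -1)).biUnion
                  (fun k => B k \ A k))ᶜ, (w i : ℤ)|} =
    sInf {e : ℤ | ∃ A' : Finset (Fin m),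
        e = |(∑ k ∈ A', (E k : ℤ)) - ∑ k ∈ A'ᶜ, (E k : ℤ)|} := by
  classical
  -- splitting a signed sum according to the sign
  have L : ∀ (f : Fin m → ℤ) (t : Fin m → ℤ), (∀ k, t k = -1 ∨ t k = 1) →
      ∑ k, t k * f k = (∑ k ∈ Finset.univ.filter (fun k => t k = 1), f k)
        - ∑ k ∈ (Finset.univ.filter (fun k => t k = 1))ᶜ, f k := by
    intro f t ht
    rw [← Finset.sum_filter_add_sum_filter_not Finset.univ (fun k => t k = 1)
      (fun k => t k * f k)]
    have h1 : ∑ k ∈ Finset.univ.filter (fun k => t k = 1), t k * f k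
        = ∑ k ∈ Finset.univ.filter (fun k => t k = 1), f k :=
      Finset.sum_congr rfl (fun k hk => by rw [(Finset.mem_filter.mp hk).2, one_mul])
    have h2 : ∑ k ∈ Finset.univ.filter (fun k => ¬ t k = 1), t k * f k
        = -∑ k ∈ Finset.univ.filter (fun k => ¬ t k = 1), f k := by
      rw [← Finset.sum_neg_distrib]
      exact Finset.sum_congr rfl (fun k hk => by
        rcases ht k with h | h
        · rw [h]; ring
        · exact absurd h (Finset.mem_filter.mp hk).2)
    rw [h1, h2, Finset.compl_filter]
    ring
  -- flipping signs to absorb absolute values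
  have flip : ∀ t : Fin m → ℤ, (∀ k, t k = -1 ∨ t k = 1) →
      ∃ u : Fin m → ℤ, (∀ k, u k = -1 ∨ u k = 1) ∧
        (∑ k, t k * D k = ∑ k, u k * (E k : ℤ)) ∧
        (∑ k, t k * (E k : ℤ) = ∑ k, u k * D k) := by
    intro t ht
    refine ⟨fun k => if 0 ≤ D k then t k else -t k, ?_, ?_, ?_⟩
    · intro k
      by_cases h : 0 ≤ D k
      · simpa [h] using ht k
      · rcases ht k with h' | h' <;> simp [h, h']
    · refine Finset.sum_congr rfl (fun k _ => ?_)
      by_cases h : 0 ≤ D k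
      · simp [h, hE k, abs_of_nonneg h]
      · rw [hE k, abs_of_neg (lt_of_not_ge h)]; simp [h]
    · refine Finset.sum_congr rfl (fun k _ => ?_)
      by_cases h : 0 ≤ D k
      · simp [h, hE k, abs_of_nonneg h]
      · rw [hE k, abs_of_neg (lt_of_not_ge h)]; simp [h]
  -- the merged error equals the signed sum of the D k
  have M : ∀ s : Fin m → ℤ, (∀ k, s k = -1 ∨ s k = 1) →
      (∑ i ∈ (Finset.univ.filter (fun k => s k = 1)).biUnion A ∪
          (Finset.univ.filter (fun k => s k = -1)).biUnion
            (fun k => B k \ A k), (w i : ℤ)) -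
        ∑ i ∈ ((Finset.univ.filter (fun k => s k = 1)).biUnion A ∪
          (Finset.univ.filter (fun k => s k = -1)).biUnion
            (fun k => B k \ A k))ᶜ, (w i : ℤ) = ∑ k, s k * D k := by
    intro s hs
    set C : Fin m → Finset (Fin n) := fun k => if s k = 1 then A k else B k \ A k with hC
    have hCB : ∀ k, C k ⊆ B k := by
      intro k
      by_cases h : s k = 1 <;> simp [hC, h, hA k, Finset.sdiff_subset]
    have hU : (Finset.univ.filter (fun k => s k = 1)).biUnion A ∪
        (Finset.univ.filter (fun k => s k = -1)).biUnion (fun k => B k \ A k)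
        = Finset.univ.biUnion C := by
      ext i
      simp only [Finset.mem_union, Finset.mem_biUnion, Finset.mem_filter,
        Finset.mem_univ, true_and]
      constructor
      · rintro (⟨k, hk, hi⟩ | ⟨k, hk, hi⟩)
        · exact ⟨k, by simp [hC, hk, hi]⟩
        · have hne : s k ≠ 1 := by rw [hk]; decide
          exact ⟨k, by simp [hC, hne, hi]⟩
      · rintro ⟨k, hi⟩
        by_cases h : s k = 1
        · exact Or.inl ⟨k, h, by simpa [hC, h] using hi⟩
        · exact Or.inr ⟨k, (hs k).resolve_right h, by simpa [hC, h] using hi⟩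
    have hPD : ((Finset.univ : Finset (Fin m)) : Set (Fin m)).PairwiseDisjoint C :=
      fun k _ l _ hkl => (hdisj k l hkl).mono (hCB k) (hCB l)
    have hPB : ((Finset.univ : Finset (Fin m)) : Set (Fin m)).PairwiseDisjoint B :=
      fun k _ l _ hkl => hdisj k l hkl
    have hsumU : ∑ i ∈ Finset.univ.biUnion C, (w i : ℤ)
        = ∑ k, ∑ i ∈ C k, (w i : ℤ) := Finset.sum_biUnion hPD
    have hT : ∑ i, (w i : ℤ) = ∑ k, ∑ i ∈ B k, (w i : ℤ) := by
      rw [← hcover]; exact Finset.sum_biUnion hPB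
    have hcompl : ∑ i ∈ (Finset.univ.biUnion C)ᶜ, (w i : ℤ)
        = (∑ i, (w i : ℤ)) - ∑ i ∈ Finset.univ.biUnion C, (w i : ℤ) := by
      rw [eq_sub_iff_add_eq, Finset.sum_compl_add_sum]
    have key : ∀ k, s k * D k
        = 2 * (∑ i ∈ C k, (w i : ℤ)) - ∑ i ∈ B k, (w i : ℤ) := by
      intro k
      have hsd : ∑ i ∈ B k \ A k, (w i : ℤ)
          = (∑ i ∈ B k, (w i : ℤ)) - ∑ i ∈ A k, (w i : ℤ) :=
        Finset.sum_sdiff_eq_sub (hA k)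
      rcases hs k with h | h
      · have hne : s k ≠ 1 := by rw [h]; decide
        have hCk : C k = B k \ A k := by simp [hC, hne]
        rw [hCk, hD k, h, hsd]; ring
      · have hCk : C k = A k := by simp [hC, h]
        rw [hCk, hD k, h, hsd]; ring
    have hsum : ∑ k, s k * D k
        = ∑ k, (2 * (∑ i ∈ C k, (w i : ℤ)) - ∑ i ∈ B k, (w i : ℤ)) :=
      Finset.sum_congr rfl (fun k _ => key k)
    rw [hU, hcompl, hsumU, hT, hsum, Finset.sum_sub_distrib, ← Finset.mul_sum]
    ring
  congr 1
  ext e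
  simp only [Set.mem_setOf_eq]
  constructor
  · rintro ⟨s, hs, rfl⟩
    obtain ⟨u, hu, h1, _⟩ := flip s hs
    exact ⟨Finset.univ.filter (fun k => u k = 1), by rw [M s hs, h1, L _ u hu]⟩
  · rintro ⟨A', rfl⟩
    set t : Fin m → ℤ := fun k => if k ∈ A' then 1 else -1 with ht
    have hts : ∀ k, t k = -1 ∨ t k = 1 := by
      intro k; by_cases h : k ∈ A' <;> simp [ht, h]
    have hfilter : Finset.univ.filter (fun k => t k = 1) = A' := by
      ext k
      by_cases h : k ∈ A' <;> simp [ht, h]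
    obtain ⟨u, hu, _, h2⟩ := flip t hts
    refine ⟨u, hu, ?_⟩
    rw [M u hu, ← h2, L _ t hts, hfilter]
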